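/- A commutative ring R is Gaussian (c(fg) = c(f)c(g) for all f, g ∈ R[X]) if and only if for every ideal I of R, the ring R/I is Armendariz (i.e., for all f, g ∈ (R/I)[X], fg = 0 implies c(f)c(g) = (0)). -/

import Mathlib

open Polynomial

/-- A proper ideal `I` is `n`-absorbing if whenever a product of `n+1` elements lies in `I`,
the product of some `n` of them lies in `I`. -/
def IsNAbsorbing {R : Type*} [CommRing R] (I : Ideal R) (n : ℕ) : Prop :=
  I ≠ ⊤ ∧ ∀ x : Fin (n + 1) → R, (∏ i, x i) ∈ I →
    ∃ j, (∏ i ∈ Finset.univ.erase j, x i) ∈ I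

/-- A proper ideal `I` is strongly `n`-absorbing if whenever a product of `n+1` ideals is
contained in `I`, the product of some `n` of them is contained in `I`. -/
def IsStronglyNAbsorbing {R : Type*} [CommRing R] (I : Ideal R) (n : ℕ) : Prop :=
  I ≠ ⊤ ∧ ∀ J : Fin (n + 1) → Ideal R, (∏ i, J i) ≤ I →
    ∃ j, (∏ i ∈ Finset.univ.erase j, J i) ≤ I

/-- The content of a polynomial: the ideal generated by its coefficients. -/
def polyContent {R : Type*} [CommRing R] (f : R[X]) : Ideal R :=
  Ideal.span (Set.range f.coeff)

lemma coeff_mem_polyContent {R : Type*} [CommRing R] (f : R[X]) (n : ℕ) :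
    f.coeff n ∈ polyContent f :=
  Ideal.subset_span ⟨n, rfl⟩

lemma polyContent_le_iff {R : Type*} [CommRing R] {f : R[X]} {I : Ideal R} :
    polyContent f ≤ I ↔ ∀ n, f.coeff n ∈ I := by
  rw [polyContent, Ideal.span_le]
  constructor
  · intro h n; exact h ⟨n, rfl⟩
  · rintro h x ⟨n, rfl⟩; exact h n

lemma polyContent_mul_le {R : Type*} [CommRing R] (f g : R[X]) :
    polyContent (f * g) ≤ polyContent f * polyContent g := by
  rw [polyContent_le_iff]
  intro n
  rw [coeff_mul]
  exact Ideal.sum_mem _ fun p _ =>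
    Ideal.mul_mem_mul (coeff_mem_polyContent f p.1) (coeff_mem_polyContent g p.2)

lemma polyContent_mul_polyContent_le_iff {R : Type*} [CommRing R] {f g : R[X]}
    {I : Ideal R} :
    polyContent f * polyContent g ≤ I ↔ ∀ i j, f.coeff i * g.coeff j ∈ I := by
  rw [polyContent, polyContent, Ideal.span_mul_span, Ideal.span_le]
  constructor
  · intro h i j
    apply h
    simp only [Set.mem_mul]
    exact ⟨_, ⟨i, rfl⟩, _, ⟨j, rfl⟩, rfl⟩
  · rintro h x hx
    simp only [Set.mem_mul] at hx
    obtain ⟨a, ⟨i, rfl⟩, b, ⟨j, rfl⟩, rfl⟩ := hx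
    exact h i j

/-- `R` is Gaussian iff `R/I` is Armendariz for every ideal `I` of `R`. -/
theorem gaussian_iff_quotients_armendariz {R : Type*} [CommRing R] :
    (∀ f g : R[X], polyContent (f * g) = polyContent f * polyContent g) ↔
      ∀ I : Ideal R, ∀ f g : (R ⧸ I)[X], f * g = 0 →
        ∀ i j : ℕ, f.coeff i * g.coeff j = 0 := by
  constructor
  · intro h I f g hfg i j
    obtain ⟨F, rfl⟩ := Polynomial.map_surjective _ Ideal.Quotient.mk_surjective f
    obtain ⟨G, rfl⟩ := Polynomial.map_surjective _ Ideal.Quotient.mk_surjective g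
    have hFG : polyContent (F * G) ≤ I := by
      rw [polyContent_le_iff]
      intro n
      rw [← Ideal.Quotient.eq_zero_iff_mem, ← Polynomial.coeff_map, Polynomial.map_mul, hfg,
        Polynomial.coeff_zero]
    have := (h F G ▸ hFG : polyContent F * polyContent G ≤ I)
    have hij : F.coeff i * G.coeff j ∈ I :=
      this (Ideal.mul_mem_mul (coeff_mem_polyContent F i) (coeff_mem_polyContent G j))
    simp only [Polynomial.coeff_map]
    rw [← map_mul, Ideal.Quotient.eq_zero_iff_mem]
    exact hij
  · intro h f g
    refine le_antisymm (polyContent_mul_le f g) ?_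
    set I := polyContent (f * g) with hI
    have hmap : (f.map (Ideal.Quotient.mk I)) * (g.map (Ideal.Quotient.mk I)) = 0 := by
      rw [← Polynomial.map_mul]
      ext n
      rw [Polynomial.coeff_map, Polynomial.coeff_zero, Ideal.Quotient.eq_zero_iff_mem]
      exact coeff_mem_polyContent (f * g) n
    have := h I _ _ hmap
    rw [polyContent_mul_polyContent_le_iff]
    intro i j
    have := this i j
    rw [Polynomial.coeff_map, Polynomial.coeff_map, ← map_mul,
      Ideal.Quotient.eq_zero_iff_mem] at this
    exact this
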